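/- Let A be a commutative ring and let [·]: A → ℝ be a function satisfying [fg] = [f]·[g] for all f, g ∈ A, 0 ≤ [f] ≤ 1 for all f ∈ A, [1] = 1, and the ordinary triangle inequality [f+g] ≤ [f] + [g] for all f, g ∈ A. Then [·] satisfies the ultrametric inequality: [f+g] ≤ max{[f], [g]} for all f, g ∈ A. -/

import Mathlib

open Filter Real Topology Finset

theorem ultrametric_of_triangle_inequality
    (A : Type*) [CommRing A] (v : A → ℝ)
    (hmul : ∀ f g : A, v (f * g) = v f * v g)
    (hnonneg : ∀ f : A, 0 ≤ v f)
    (hle_one : ∀ f : A, v f ≤ 1)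
    (hone : v 1 = 1)
    (htri : ∀ f g : A, v (f + g) ≤ v f + v g) :
    ∀ f g : A, v (f + g) ≤ max (v f) (v g) := by
  -- first, dispose of the degenerate case v 0 = 1 (then v ≡ 1)
  by_cases h0 : v 0 = 1
  · intro f g
    have hconst : ∀ x : A, v x = 1 := by
      intro x
      have := hmul x 0
      rw [mul_zero, h0, mul_one] at this
      exact this.symm
    rw [hconst (f + g), hconst f]
    exact le_max_left 1 _
  -- now v 0 = 0
  have hv0 : v 0 = 0 := by
    have hsq : v 0 * v 0 = v 0 := by
      have := hmul 0 0; rw [mul_zero] at this; linarith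
    rcases mul_eq_zero.mp (by nlinarith : v 0 * (v 0 - 1) = 0) with h | h
    · exact h
    · exact absurd (by linarith) h0
  -- v of a power
  have hpow : ∀ (x : A) (n : ℕ), v (x ^ n) = v x ^ n := by
    intro x n
    induction n with
    | zero => simpa using hone
    | succ n ih => rw [pow_succ, pow_succ, hmul, ih]
  -- v of a finite sum
  have hsum : ∀ (s : Finset ℕ) (t : ℕ → A), v (∑ i ∈ s, t i) ≤ ∑ i ∈ s, v (t i) := by
    intro s t
    induction s using Finset.cons_induction with
    | empty => simp [hv0]
    | cons a s ha ih =>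
      rw [Finset.sum_cons, Finset.sum_cons]
      exact (htri _ _).trans (add_le_add le_rfl ih)
  intro f g
  set M := max (v f) (v g) with hM
  set L := v (f + g) with hL
  have hM0 : 0 ≤ M := le_trans (hnonneg f) (le_max_left _ _)
  have hL0 : 0 ≤ L := hnonneg _
  -- key inequality
  have key : ∀ n : ℕ, L ^ n ≤ (n + 1 : ℝ) * M ^ n := by
    intro n
    have hexp : (f + g) ^ n = ∑ k ∈ Finset.range (n + 1),
        f ^ k * g ^ (n - k) * (n.choose k : A) := add_pow f g n
    calc L ^ n = v ((f + g) ^ n) := (hpow _ _).symm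
      _ ≤ ∑ k ∈ Finset.range (n + 1), v (f ^ k * g ^ (n - k) * (n.choose k : A)) := by
          rw [hexp]; exact hsum _ _
      _ ≤ ∑ k ∈ Finset.range (n + 1), M ^ n := by
          apply Finset.sum_le_sum
          intro k hk
          have hkn : k ≤ n := Nat.lt_succ_iff.mp (Finset.mem_range.mp hk)
          rw [hmul, hmul, hpow, hpow]
          calc v f ^ k * v g ^ (n - k) * v ((n.choose k : A))
              ≤ M ^ k * M ^ (n - k) * 1 := by
                gcongr <;>
                  first
                    | exact hnonneg _ | exact hle_one _ | exact le_max_left _ _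
                    | exact le_max_right _ _ | exact hM0 | exact pow_nonneg (hnonneg _) _
            _ = M ^ n := by
                rw [mul_one, ← pow_add, Nat.add_sub_cancel' hkn]
      _ = (n + 1 : ℝ) * M ^ n := by
          rw [Finset.sum_const, Finset.card_range, nsmul_eq_mul]
          push_cast; ring
  -- pass to the limit
  have hroot : ∀ n : ℕ, 1 ≤ n → L ≤ ((n : ℝ) + 1) ^ ((n : ℝ)⁻¹) * M := by
    intro n hn
    have hn0 : (n : ℝ) ≠ 0 := Nat.cast_ne_zero.mpr (by omega)
    have h1 : L = (L ^ n) ^ ((n : ℝ)⁻¹) := by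
      rw [← Real.rpow_natCast L n, ← Real.rpow_mul hL0,
        mul_inv_cancel₀ hn0, Real.rpow_one]
    rw [h1]
    calc (L ^ n) ^ ((n : ℝ)⁻¹) ≤ (((n : ℝ) + 1) * M ^ n) ^ ((n : ℝ)⁻¹) :=
          Real.rpow_le_rpow (by positivity) (key n) (by positivity)
      _ = ((n : ℝ) + 1) ^ ((n : ℝ)⁻¹) * M := by
          rw [Real.mul_rpow (by positivity) (by positivity), ← Real.rpow_natCast M n,
            ← Real.rpow_mul hM0, mul_inv_cancel₀ hn0, Real.rpow_one]
  have hT : Tendsto (fun n : ℕ => ((n : ℝ) + 1) ^ ((n : ℝ)⁻¹) * M) atTop (𝓝 M) := by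
    have h1 : Tendsto (fun n : ℕ => ((n : ℝ) + 1) ^ ((n : ℝ)⁻¹)) atTop (𝓝 1) := by
      have hb : Tendsto (fun n : ℕ => (n : ℝ) + 1) atTop atTop :=
        tendsto_atTop_add_const_right _ 1 tendsto_natCast_atTop_atTop
      have := (tendsto_rpow_div_mul_add 1 1 (-1) zero_ne_one).comp hb
      refine this.congr fun n => ?_
      simp only [Function.comp_apply]
      congr 1
      rw [one_div]
      congr 1
      ring
    have := h1.mul_const M
    rwa [one_mul] at this
  exact ge_of_tendsto hT (eventually_atTop.mpr ⟨1, fun n hn => hroot n hn⟩)
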